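/- Let K be a field and f₁, …, f_{n+1} ∈ K[x₁, …, xₙ] homogeneous polynomials of degree d ≥ 1. Then there exists a nonzero homogeneous polynomial A ∈ K[y₁, …, y_{n+1}] of degree M = n·d^{n-1} such that A(f₁, …, f_{n+1}) = 0. -/

import Mathlib

private lemma desc_le_aux (d M : ℕ) (hd : 1 ≤ d) :
    ∀ k, (M * d + k).descFactorial k ≤ d ^ k * (M + k).descFactorial k := by
  intro k
  induction k with
  | zero => simp
  | succ k ih =>
    have h1 : (M * d + (k + 1)).descFactorial (k + 1)
        = (M * d + k + 1) * (M * d + k).descFactorial k :=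
      Nat.succ_descFactorial_succ (M * d + k) k
    have h2 : (M + (k + 1)).descFactorial (k + 1)
        = (M + k + 1) * (M + k).descFactorial k :=
      Nat.succ_descFactorial_succ (M + k) k
    rw [h1, h2, pow_succ]
    calc (M * d + k + 1) * (M * d + k).descFactorial k
        ≤ (d * (M + k + 1)) * (d ^ k * (M + k).descFactorial k) := by
          apply Nat.mul_le_mul _ ih
          nlinarith
      _ = d ^ k * d * ((M + k + 1) * (M + k).descFactorial k) := by ring

private lemma key_choose (n d : ℕ) (hn : 0 < n) (hd : 1 ≤ d) :
    (d * (n * d ^ (n - 1)) + (n - 1)).choose (n - 1) < (n * d ^ (n - 1) + n).choose n := by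
  obtain ⟨k, rfl⟩ : ∃ k, n = k + 1 := ⟨n - 1, by omega⟩
  simp only [Nat.add_sub_cancel]
  set M := (k + 1) * d ^ k with hM
  have hA : 0 < (M + k).descFactorial k :=
    Nat.pos_of_ne_zero fun h => absurd (Nat.descFactorial_eq_zero_iff_lt.mp h) (by omega)
  have h1 : (k + 1) * ((M * d + k).descFactorial k) < (M + (k + 1)).descFactorial (k + 1) := by
    calc (k + 1) * ((M * d + k).descFactorial k)
        ≤ (k + 1) * (d ^ k * (M + k).descFactorial k) :=
          Nat.mul_le_mul_left _ (desc_le_aux d M hd k)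
      _ = M * (M + k).descFactorial k := by rw [hM]; ring
      _ < (M + k + 1) * (M + k).descFactorial k := by
          exact Nat.mul_lt_mul_of_lt_of_le (by omega) le_rfl hA
      _ = (M + (k + 1)).descFactorial (k + 1) := (Nat.succ_descFactorial_succ (M + k) k).symm
  rw [Nat.descFactorial_eq_factorial_mul_choose, Nat.descFactorial_eq_factorial_mul_choose,
    Nat.factorial_succ] at h1
  have h2 : (k + 1) * Nat.factorial k * ((M * d + k).choose k)
      < (k + 1) * Nat.factorial k * ((M + (k + 1)).choose (k + 1)) := by
    calc (k + 1) * Nat.factorial k * ((M * d + k).choose k)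
        = (k + 1) * (Nat.factorial k * ((M * d + k).choose k)) := by ring
      _ < (k + 1) * Nat.factorial k * ((M + (k + 1)).choose (k + 1)) := h1
  have := Nat.lt_of_mul_lt_mul_left h2
  calc (d * M + k).choose k = (M * d + k).choose k := by rw [mul_comm]
    _ < (M + (k + 1)).choose (k + 1) := this

open MvPolynomial in
/-- The homogeneous component of degree `M` is linearly equivalent to finsupps on `Sym`. -/
private noncomputable def homogEquiv (K : Type*) [Field K] (k M : ℕ) :
    (homogeneousSubmodule (Fin k) K M) ≃ₗ[K] (Sym (Fin k) M →₀ K) := by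
  classical
  refine (LinearEquiv.ofEq _ _
    (homogeneousSubmodule_eq_finsupp_supported (Fin k) K M)).trans
    ((AddMonoidAlgebra.supportedEquivFinsupp _).trans (Finsupp.domLCongr ?_))
  refine (Equiv.subtypeEquivRight (fun x => ?_)).trans (Sym.equivNatSum (Fin k) M).symm
  simp [Finsupp.degree, Finsupp.sum]
  exact Iff.rfl

open MvPolynomial in
private lemma finrank_homog (K : Type*) [Field K] (k M : ℕ) :
    Module.finrank K (homogeneousSubmodule (Fin k) K M) = (k + M - 1).choose M := by
  rw [(homogEquiv K k M).finrank_eq, Module.finrank_finsupp_self, Sym.card_sym_eq_choose,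
    Fintype.card_fin]

open MvPolynomial in
private lemma fd_homog (K : Type*) [Field K] (k M : ℕ) :
    FiniteDimensional K (homogeneousSubmodule (Fin k) K M) :=
  Module.Finite.equiv (homogEquiv K k M).symm

theorem stmt_13 (K : Type*) [Field K] (n d : ℕ) (hn : 0 < n) (hd : 1 ≤ d)
    (f : Fin (n + 1) → MvPolynomial (Fin n) K)
    (hf : ∀ i, (f i).IsHomogeneous d) :
    ∃ A : MvPolynomial (Fin (n + 1)) K,
      A ≠ 0 ∧ A.IsHomogeneous (n * d ^ (n - 1)) ∧ MvPolynomial.aeval f A = 0 := by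
  by_contra hcon
  push_neg at hcon
  set M := n * d ^ (n - 1) with hM
  set V := MvPolynomial.homogeneousSubmodule (Fin (n + 1)) K M with hV
  set W := MvPolynomial.homogeneousSubmodule (Fin n) K (d * M) with hW
  haveI : FiniteDimensional K W := fd_homog K n (d * M)
  have hmap : ∀ A : V, MvPolynomial.aeval f (A : MvPolynomial (Fin (n + 1)) K) ∈ W :=
    fun A => A.2.aeval f hf
  let φ : V →ₗ[K] W :=
    ((MvPolynomial.aeval f).toLinearMap.comp (Submodule.subtype V)).codRestrict W hmap
  have hinj : Function.Injective φ := by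
    rw [← LinearMap.ker_eq_bot, eq_bot_iff]
    rintro ⟨A, hA⟩ hAk
    have h0 : MvPolynomial.aeval f A = 0 := congrArg Subtype.val (LinearMap.mem_ker.mp hAk)
    rw [Submodule.mem_bot]
    ext : 1
    by_contra hne
    exact hcon A hne hA h0
  have hle : Module.finrank K V ≤ Module.finrank K W :=
    LinearMap.finrank_le_finrank_of_injective hinj
  rw [hV, hW, finrank_homog, finrank_homog] at hle
  have e1 : (n + 1 + M - 1) = n + M := by omega
  have e2 : (n + d * M - 1) = d * M + (n - 1) := by omega
  rw [e1, e2, Nat.choose_symm_add, Nat.add_comm n M, Nat.choose_symm_add] at hle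
  have hk := key_choose n d hn hd
  rw [← hM] at hk
  exact absurd hle (Nat.not_le.mpr hk)
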